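/- arXiv:1210.7782 — 6 statements merged into one kernel-verified Lean document; each statement's English description precedes it below -/
import Mathlib

section
/- Let u : ℝ → ℝ be twice continuously differentiable with e^{-x} u(x) → 0 and e^{-x} u'(x) → 0 as x → +∞, and suppose e^{-ξ}(u(ξ) - u''(ξ)) is integrable on [x, ∞) for each x. Then for every x ∈ ℝ, u(x) + u'(x) = e^{x} ∫_{x}^{+∞} e^{-ξ} (u(ξ) - u''(ξ)) dξ. -/
open MeasureTheory Real Filter

theorem identity_u_plus_u'
    (u : ℝ → ℝ) (hu : ContDiff ℝ 2 u)
    (hlim : Tendsto (fun x => Real.exp (-x) * u x) atTop (nhds 0))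
    (hlim' : Tendsto (fun x => Real.exp (-x) * deriv u x) atTop (nhds 0))
    (hint : ∀ x : ℝ, IntegrableOn
      (fun ξ => Real.exp (-ξ) * (u ξ - deriv (deriv u) ξ)) (Set.Ici x)) :
    ∀ x : ℝ, u x + deriv u x =
      Real.exp x * ∫ ξ in Set.Ici x, Real.exp (-ξ) * (u ξ - deriv (deriv u) ξ) := by
  intro x
  have hu1 : Differentiable ℝ u := hu.differentiable (by norm_num)
  have hu2 : ContDiff ℝ 1 (deriv u) := by
    have h2 : ContDiff ℝ ((1:ℕ) + 1) u := by exact_mod_cast hu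
    exact_mod_cast (contDiff_succ_iff_deriv.mp h2).2.2
  have hu2' : Differentiable ℝ (deriv u) := hu2.differentiable (by norm_num)
  set g : ℝ → ℝ := fun ξ => -(Real.exp (-ξ) * (u ξ + deriv u ξ)) with hg
  have hderiv : ∀ ξ : ℝ, HasDerivAt g (Real.exp (-ξ) * (u ξ - deriv (deriv u) ξ)) ξ := by
    intro ξ
    have he : HasDerivAt (fun t : ℝ => Real.exp (-t)) (-Real.exp (-ξ)) ξ := by
      simpa [Function.comp_def] using ((Real.hasDerivAt_exp (-ξ)).comp ξ (hasDerivAt_neg ξ))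
    have hs : HasDerivAt (fun t => u t + deriv u t) (deriv u ξ + deriv (deriv u) ξ) ξ :=
      (hu1 ξ).hasDerivAt.add (hu2' ξ).hasDerivAt
    have := (he.mul hs).neg
    exact this.congr_deriv (by ring)
  have htend : Tendsto g atTop (nhds 0) := by
    have := (hlim.add hlim').neg
    simpa [hg, mul_add, neg_add] using this
  have key : (∫ ξ in Set.Ioi x, Real.exp (-ξ) * (u ξ - deriv (deriv u) ξ)) = 0 - g x := by
    apply integral_Ioi_of_hasDerivAt_of_tendsto
    · exact ((hderiv x).continuousAt).continuousWithinAt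
    · intro t _; exact hderiv t
    · exact (hint x).mono_set Set.Ioi_subset_Ici_self
    · exact htend
  rw [MeasureTheory.integral_Ici_eq_integral_Ioi, key]
  simp only [hg, zero_sub, neg_neg]
  rw [← mul_assoc, ← Real.exp_add]
  simp
end

section
/- Let p(x) = (1/2)e^{-|x|} and let a ∈ ℝ. For any u ∈ H¹(ℝ) (so u is continuous and u, u' ∈ L²) and any x ∈ ℝ, the one-sided convolution satisfies ((p·1_{ℝ⁺}) * (a²u² + u'²))(x) ≥ (a/2) u(x)² - a ((p·1_{ℝ⁺}) * u²)(x), where (p·1_{ℝ⁺}) * f (x) = (e^{-x}/2) ∫_{-∞}^{x} e^{ξ} f(ξ) dξ. -/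
open MeasureTheory Real

private lemma exp_mul_integrableOn {h : ℝ → ℝ} (hh : Integrable h) (x : ℝ) :
    IntegrableOn (fun ξ => Real.exp ξ * h ξ) (Set.Iic x) := by
  refine Integrable.mono' ((hh.abs.const_mul (Real.exp x)).restrict)
    (Real.continuous_exp.aestronglyMeasurable.mul hh.aestronglyMeasurable).restrict ?_
  filter_upwards [ae_restrict_mem measurableSet_Iic] with ξ hξ
  rw [Real.norm_eq_abs, abs_mul, abs_of_pos (Real.exp_pos ξ)]
  exact mul_le_mul_of_nonneg_right (Real.exp_le_exp.2 hξ) (abs_nonneg _)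

theorem one_sided_convolution_lower_bound
    (a : ℝ) (u : ℝ → ℝ) (hu : Differentiable ℝ u)
    (hu2 : MemLp u 2 volume) (hu'2 : MemLp (deriv u) 2 volume) :
    ∀ x : ℝ,
      (Real.exp (-x) / 2) * ∫ ξ in Set.Iic x, Real.exp ξ * (a^2 * u ξ^2 + deriv u ξ^2)
        ≥ (a/2) * u x^2 - a * ((Real.exp (-x) / 2) * ∫ ξ in Set.Iic x, Real.exp ξ * u ξ^2) := by
  intro x
  have husq : Integrable (fun ξ => u ξ ^ 2) := hu2.integrable_sq
  have hu'sq : Integrable (fun ξ => deriv u ξ ^ 2) := hu'2.integrable_sq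
  have hderiv_sq : ∀ ξ : ℝ, HasDerivAt (fun t => u t ^ 2) (2 * u ξ * deriv u ξ) ξ := by
    intro ξ
    simpa [mul_comm, mul_assoc] using ((hu ξ).hasDerivAt.fun_pow 2)
  have hcross : Integrable (fun ξ => 2 * u ξ * deriv u ξ) := by
    refine Integrable.mono' (husq.add hu'sq)
      ((aestronglyMeasurable_const.mul hu.continuous.aestronglyMeasurable).mul
        (measurable_deriv u).aestronglyMeasurable) ?_
    filter_upwards with ξ
    have := sq_nonneg (u ξ - deriv u ξ)
    have := sq_nonneg (u ξ + deriv u ξ)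
    simp only [Pi.add_apply, Real.norm_eq_abs]
    rw [abs_le]; constructor <;> nlinarith
  -- u² tends to 0 at -∞
  have htend : Filter.Tendsto (fun ξ => u ξ ^ 2) Filter.atBot (nhds 0) :=
    tendsto_zero_of_hasDerivAt_of_integrableOn_Iic (a := 0)
      (fun ξ _ => hderiv_sq ξ) hcross.integrableOn husq.integrableOn
  -- FTC on g(ξ) = e^ξ u(ξ)²
  have hg : ∀ ξ : ℝ, HasDerivAt (fun t => Real.exp t * u t ^ 2)
      (Real.exp ξ * u ξ ^ 2 + Real.exp ξ * (2 * u ξ * deriv u ξ)) ξ := by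
    intro ξ
    simpa [mul_comm] using (Real.hasDerivAt_exp ξ).fun_mul (hderiv_sq ξ)
  have hI1 : IntegrableOn (fun ξ => Real.exp ξ * u ξ ^ 2) (Set.Iic x) :=
    exp_mul_integrableOn husq x
  have hI2 : IntegrableOn (fun ξ => Real.exp ξ * deriv u ξ ^ 2) (Set.Iic x) :=
    exp_mul_integrableOn hu'sq x
  have hI3 : IntegrableOn (fun ξ => Real.exp ξ * (2 * u ξ * deriv u ξ)) (Set.Iic x) :=
    exp_mul_integrableOn hcross x
  have hgtend : Filter.Tendsto (fun ξ => Real.exp ξ * u ξ ^ 2) Filter.atBot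
      (nhds 0) := by
    simpa using Real.tendsto_exp_atBot.mul htend
  have hFTC : ∫ ξ in Set.Iic x,
      (Real.exp ξ * u ξ ^ 2 + Real.exp ξ * (2 * u ξ * deriv u ξ))
      = Real.exp x * u x ^ 2 := by
    have := MeasureTheory.integral_Iic_of_hasDerivAt_of_tendsto'
      (a := x) (m := 0)
      (f := fun t => Real.exp t * u t ^ 2)
      (f' := fun ξ => Real.exp ξ * u ξ ^ 2 + Real.exp ξ * (2 * u ξ * deriv u ξ))
      (fun ξ _ => hg ξ) (hI1.add hI3) hgtend
    simpa using this
  have hsplit : ∫ ξ in Set.Iic x,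
      (Real.exp ξ * u ξ ^ 2 + Real.exp ξ * (2 * u ξ * deriv u ξ))
      = (∫ ξ in Set.Iic x, Real.exp ξ * u ξ ^ 2)
        + ∫ ξ in Set.Iic x, Real.exp ξ * (2 * u ξ * deriv u ξ) :=
    integral_add hI1 hI3
  -- pointwise inequality: e^ξ(a²u² + u'²) ≥ e^ξ · a · 2uu'
  have hmono : ∫ ξ in Set.Iic x, Real.exp ξ * (a * (2 * u ξ * deriv u ξ)) ≤
      ∫ ξ in Set.Iic x, Real.exp ξ * (a ^ 2 * u ξ ^ 2 + deriv u ξ ^ 2) := by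
    refine integral_mono (exp_mul_integrableOn (hcross.const_mul a) x)
      (exp_mul_integrableOn ((husq.const_mul (a^2)).add hu'sq) x) ?_
    intro ξ
    have h1 := Real.exp_pos ξ
    have h2 := sq_nonneg (a * u ξ - deriv u ξ)
    simp only
    nlinarith
  have hval : ∫ ξ in Set.Iic x, Real.exp ξ * (a * (2 * u ξ * deriv u ξ))
      = a * (Real.exp x * u x ^ 2 - ∫ ξ in Set.Iic x, Real.exp ξ * u ξ ^ 2) := by
    rw [show (fun ξ => Real.exp ξ * (a * (2 * u ξ * deriv u ξ)))
        = fun ξ => a * (Real.exp ξ * (2 * u ξ * deriv u ξ)) by funext ξ; ring,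
      integral_const_mul]
    rw [hsplit] at hFTC
    congr 1
    linarith [hFTC]
  have key : a * (Real.exp x * u x ^ 2 - ∫ ξ in Set.Iic x, Real.exp ξ * u ξ ^ 2)
      ≤ ∫ ξ in Set.Iic x, Real.exp ξ * (a ^ 2 * u ξ ^ 2 + deriv u ξ ^ 2) := by
    rw [← hval]; exact hmono
  have hexp : Real.exp (-x) * Real.exp x = 1 := by
    rw [← Real.exp_add]; simp
  rw [ge_iff_le]
  have h := mul_le_mul_of_nonneg_left key
    (by positivity : (0:ℝ) ≤ Real.exp (-x) / 2)
  have heq : a/2 * u x^2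
        - a * (Real.exp (-x)/2 * ∫ ξ in Set.Iic x, Real.exp ξ * u ξ^2)
      = Real.exp (-x)/2 * (a * (Real.exp x * u x^2
        - ∫ ξ in Set.Iic x, Real.exp ξ * u ξ^2)) := by
    have h2 : a/2 * u x^2 = a/2 * (Real.exp (-x) * Real.exp x) * u x^2 := by
      rw [hexp]; ring
    rw [h2]; ring
  rw [heq]
  exact h
end

section
/- Let 0 ≤ γ ≤ 4, γ > 0, and set δ = (√γ/4)(√(12-3γ) - √γ). Let p(x) = (1/2)e^{-|x|}. Then for every u ∈ H¹(ℝ) with u' denoting the weak derivative, and for all x ∈ ℝ: (p * ((3-γ)/2 · u² + (γ/2) u'²))(x) ≥ δ u(x)². -/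
open MeasureTheory Real
open Topology Filter

noncomputable def p (x : ℝ) : ℝ := (1/2) * Real.exp (-|x|)

theorem zhou_inequality
    (γ : ℝ) (hγ0 : 0 < γ) (hγ4 : γ ≤ 4)
    (δ : ℝ) (hδ : δ = (Real.sqrt γ / 4) * (Real.sqrt (12 - 3*γ) - Real.sqrt γ))
    (u : ℝ → ℝ) (hu : Differentiable ℝ u)
    (hu2 : MemLp u 2 volume) (hu'2 : MemLp (deriv u) 2 volume) :
    ∀ x : ℝ,
      (∫ y, p (x - y) * ((3 - γ)/2 * u y^2 + (γ/2) * deriv u y^2)) ≥ δ * u x^2 := by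
  intro x
  -- Algebraic key identity
  have hs : Real.sqrt γ ^ 2 = γ := Real.sq_sqrt hγ0.le
  have ht : Real.sqrt (12 - 3*γ) ^ 2 = 12 - 3*γ := Real.sq_sqrt (by linarith)
  have hkey : 4*δ^2 + 2*γ*δ = γ*(3-γ) := by
    rw [hδ]
    linear_combination (-(Real.sqrt γ * Real.sqrt (12 - 3*γ))/2 + (Real.sqrt γ)^2/4 + 3 - γ) * hs
      + ((Real.sqrt γ)^2/4) * ht
  -- Basic integrability
  have hum : AEStronglyMeasurable u volume := hu2.aestronglyMeasurable
  have hu'm : AEStronglyMeasurable (deriv u) volume := hu'2.aestronglyMeasurable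
  have hI1 : Integrable (fun y => u y ^ 2) := hu2.integrable_sq
  have hI2 : Integrable (fun y => deriv u y ^ 2) := hu'2.integrable_sq
  have hI3 : Integrable (fun y => u y * deriv u y) := by
    refine Integrable.mono' ((hI1.add hI2).const_mul (1/2)) (hum.mul hu'm) ?_
    filter_upwards with y
    rw [Real.norm_eq_abs, abs_mul]
    simp only [Pi.add_apply]
    nlinarith [sq_nonneg (|u y| - |deriv u y|), sq_abs (u y), sq_abs (deriv u y)]
  have hInt2uu' : Integrable (fun y => 2 * (u y * deriv u y)) := hI3.const_mul 2
  -- derivative of u^2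
  have hd : ∀ y : ℝ, HasDerivAt (fun s => u s ^ 2) (2 * (u y * deriv u y)) y := by
    intro y
    have h := ((hu y).hasDerivAt).fun_pow 2
    simpa [pow_one, mul_assoc] using h
  -- uniform bound for u^2
  set C := u 0 ^ 2 + ∫ t, |2 * (u t * deriv u t)| with hC
  have hM : ∀ y, u y ^ 2 ≤ C := by
    intro y
    have hF : ∫ t in (0:ℝ)..y, 2 * (u t * deriv u t) = u y ^ 2 - u 0 ^ 2 :=
      intervalIntegral.integral_eq_sub_of_hasDerivAt (fun t _ => hd t)
        hInt2uu'.intervalIntegrable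
    have habs : |∫ t in (0:ℝ)..y, 2 * (u t * deriv u t)| ≤ ∫ t, |2 * (u t * deriv u t)| := by
      have h1 := intervalIntegral.abs_integral_le_integral_abs (μ := volume) (a := min 0 y) (b := max 0 y)
        (f := fun t => 2 * (u t * deriv u t)) (min_le_max)
      have h2 : |∫ t in (0:ℝ)..y, 2 * (u t * deriv u t)|
          = |∫ t in (min 0 y)..(max 0 y), 2 * (u t * deriv u t)| := by
        rcases le_total 0 y with h | h
        · rw [min_eq_left h, max_eq_right h]
        · rw [min_eq_right h, max_eq_left h, intervalIntegral.integral_symm, abs_neg]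
      have h3 : ∫ t in (min 0 y)..(max 0 y), |2 * (u t * deriv u t)|
          ≤ ∫ t, |2 * (u t * deriv u t)| := by
        rw [intervalIntegral.integral_of_le min_le_max]
        exact setIntegral_le_integral hInt2uu'.abs (ae_of_all _ fun t => abs_nonneg _)
      rw [h2]; exact h1.trans h3
    rw [hF] at habs
    have := (abs_le.mp habs).2
    simp only [hC]
    linarith
  -- p pointwise facts
  have hp_eq_left : ∀ y ∈ Set.Iic x, p (x - y) = (1/2) * Real.exp (y - x) := by
    intro y hy
    have : |x - y| = x - y := abs_of_nonneg (by simp at hy; linarith)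
    simp [p, this]
  have hp_eq_right : ∀ y ∈ Set.Ioi x, p (x - y) = (1/2) * Real.exp (x - y) := by
    intro y hy
    have hyx : x < y := hy
    have : |x - y| = -(x - y) := abs_of_nonpos (by linarith)
    simp [p, this]
  -- integrand integrability
  have hk : Integrable (fun y => (3 - γ)/2 * u y ^ 2 + γ/2 * deriv u y ^ 2) :=
    (hI1.const_mul _).add (hI2.const_mul _)
  have hpcont : Continuous fun y : ℝ => p (x - y) := by
    unfold p
    exact continuous_const.mul ((continuous_const.sub continuous_id).abs.neg.rexp)
  have hf : Integrable (fun y => p (x - y) * ((3 - γ)/2 * u y ^ 2 + γ/2 * deriv u y ^ 2)) := by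
    refine hk.bdd_mul hpcont.aestronglyMeasurable (c := 1/2) (ae_of_all _ fun y => ?_)
    rw [Real.norm_eq_abs]
    have h1 : (0:ℝ) < Real.exp (-|x - y|) := Real.exp_pos _
    have h2 : Real.exp (-|x - y|) ≤ 1 := Real.exp_le_one_iff.mpr (neg_nonpos.mpr (abs_nonneg _))
    rw [abs_of_nonneg (by unfold p; positivity)]
    unfold p; linarith
  -- half-line integrands
  set mA := fun y => (u y ^ 2 + 2 * (u y * deriv u y)) * Real.exp (y - x) with hmA
  set mB := fun y => (u y ^ 2 - 2 * (u y * deriv u y)) * Real.exp (x - y) with hmB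
  have hmm : Integrable (fun y => u y ^ 2 + 2 * (u y * deriv u y)) := hI1.add hInt2uu'
  have hmm' : Integrable (fun y => u y ^ 2 - 2 * (u y * deriv u y)) := hI1.sub hInt2uu'
  have hintA : IntegrableOn mA (Set.Iic x) := by
    refine Integrable.mono' hmm.abs.restrict
      ((hmm.1.restrict).mul
        ((Real.continuous_exp.comp (continuous_id.sub continuous_const)).aestronglyMeasurable.restrict)) ?_
    refine (ae_restrict_iff' measurableSet_Iic).2 (ae_of_all _ fun y hy => ?_)
    have hy' : y ≤ x := hy
    rw [Real.norm_eq_abs, hmA, abs_mul, Real.abs_exp]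
    have h2 : Real.exp (y - x) ≤ 1 := Real.exp_le_one_iff.mpr (by linarith)
    nlinarith [abs_nonneg (u y ^ 2 + 2 * (u y * deriv u y)), Real.exp_pos (y - x)]
  have hintB : IntegrableOn mB (Set.Ioi x) := by
    refine Integrable.mono' hmm'.abs.restrict
      ((hmm'.1.restrict).mul
        ((Real.continuous_exp.comp (continuous_const.sub continuous_id)).aestronglyMeasurable.restrict)) ?_
    refine (ae_restrict_iff' measurableSet_Ioi).2 (ae_of_all _ fun y hy => ?_)
    have hy' : x < y := hy
    rw [Real.norm_eq_abs, hmB, abs_mul, Real.abs_exp]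
    have h2 : Real.exp (x - y) ≤ 1 := Real.exp_le_one_iff.mpr (by linarith)
    nlinarith [abs_nonneg (u y ^ 2 - 2 * (u y * deriv u y)), Real.exp_pos (x - y)]
  -- FTC identities
  have hA : ∫ y in Set.Iic x, mA y = u x ^ 2 := by
    have hderiv : ∀ y ∈ Set.Iic x, HasDerivAt (fun s => u s ^ 2 * Real.exp (s - x)) (mA y) y := by
      intro y _
      have hE : HasDerivAt (fun s : ℝ => Real.exp (s - x)) (Real.exp (y - x)) y := by
        simpa using ((hasDerivAt_id y).sub_const x).exp
      have := (hd y).fun_mul hE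
      simpa [hmA] using this.congr_deriv (by ring)
    have htend : Filter.Tendsto (fun y => u y ^ 2 * Real.exp (y - x)) Filter.atBot (𝓝 0) := by
      have h1 : Filter.Tendsto (fun y : ℝ => C * Real.exp (y - x)) Filter.atBot (𝓝 0) := by
        have := (Real.tendsto_exp_atBot.comp
          (Filter.tendsto_atBot_add_const_right Filter.atBot (-x) Filter.tendsto_id)).const_mul C
        simpa [Function.comp, sub_eq_add_neg] using this
      refine tendsto_of_tendsto_of_tendsto_of_le_of_le tendsto_const_nhds h1
        (fun y => by positivity) (fun y => mul_le_mul_of_nonneg_right (hM y) (Real.exp_pos _).le)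
    have := integral_Iic_of_hasDerivAt_of_tendsto' hderiv hintA htend
    simpa using this
  have hB : ∫ y in Set.Ioi x, mB y = u x ^ 2 := by
    have hderiv : ∀ y ∈ Set.Ici x,
        HasDerivAt (fun s => -(u s ^ 2 * Real.exp (x - s))) (mB y) y := by
      intro y _
      have hE : HasDerivAt (fun s : ℝ => Real.exp (x - s)) (-Real.exp (x - y)) y := by
        simpa using ((hasDerivAt_const y x).sub (hasDerivAt_id y)).exp
      have := ((hd y).fun_mul hE).fun_neg
      simpa [hmB] using this.congr_deriv (by ring)
    have htend : Filter.Tendsto (fun y => -(u y ^ 2 * Real.exp (x - y))) Filter.atTop (𝓝 0) := by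
      have h0 : Filter.Tendsto (fun y => u y ^ 2 * Real.exp (x - y)) Filter.atTop (𝓝 0) := by
        have h1 : Filter.Tendsto (fun y : ℝ => C * Real.exp (x - y)) Filter.atTop (𝓝 0) := by
          have h2 : Filter.Tendsto (fun y : ℝ => x - y) Filter.atTop Filter.atBot :=
            Filter.tendsto_atBot_add_const_left _ x (Filter.tendsto_neg_atBot_iff.mpr Filter.tendsto_id)
          have := (Real.tendsto_exp_atBot.comp h2).const_mul C
          simpa [Function.comp] using this
        refine tendsto_of_tendsto_of_tendsto_of_le_of_le tendsto_const_nhds h1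
          (fun y => by positivity) (fun y => mul_le_mul_of_nonneg_right (hM y) (Real.exp_pos _).le)
      simpa using h0.neg
    have := integral_Ioi_of_hasDerivAt_of_tendsto' hderiv hintB htend
    simpa using this
  -- pointwise inequalities on the half lines
  have hptA : ∀ y ∈ Set.Iic x, (δ/2) * mA y
      ≤ p (x - y) * ((3 - γ)/2 * u y ^ 2 + γ/2 * deriv u y ^ 2) := by
    intro y hy
    rw [hp_eq_left y hy, hmA]
    have hQ : 0 ≤ (3 - γ)/2 * u y ^ 2 + γ/2 * deriv u y ^ 2
        - δ * (u y ^ 2 + 2 * (u y * deriv u y)) := by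
      nlinarith [sq_nonneg (δ * u y - γ/2 * deriv u y), hγ0, hkey, sq_nonneg (u y)]
    nlinarith [mul_nonneg (Real.exp_pos (y - x)).le hQ]
  have hptB : ∀ y ∈ Set.Ioi x, (δ/2) * mB y
      ≤ p (x - y) * ((3 - γ)/2 * u y ^ 2 + γ/2 * deriv u y ^ 2) := by
    intro y hy
    rw [hp_eq_right y hy, hmB]
    have hQ : 0 ≤ (3 - γ)/2 * u y ^ 2 + γ/2 * deriv u y ^ 2
        - δ * (u y ^ 2 - 2 * (u y * deriv u y)) := by
      nlinarith [sq_nonneg (δ * u y + γ/2 * deriv u y), hγ0, hkey, sq_nonneg (u y)]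
    nlinarith [mul_nonneg (Real.exp_pos (x - y)).le hQ]
  -- assemble
  have hIA : (δ/2) * u x ^ 2
      ≤ ∫ y in Set.Iic x, p (x - y) * ((3 - γ)/2 * u y ^ 2 + γ/2 * deriv u y ^ 2) := by
    have := setIntegral_mono_on (hintA.const_mul (δ/2)) hf.integrableOn measurableSet_Iic hptA
    rwa [integral_const_mul, hA] at this
  have hIB : (δ/2) * u x ^ 2
      ≤ ∫ y in Set.Ioi x, p (x - y) * ((3 - γ)/2 * u y ^ 2 + γ/2 * deriv u y ^ 2) := by
    have := setIntegral_mono_on (hintB.const_mul (δ/2)) hf.integrableOn measurableSet_Ioi hptB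
    rwa [integral_const_mul, hB] at this
  have hsplit := intervalIntegral.integral_Iic_add_Ioi (b := x) hf.integrableOn hf.integrableOn
  rw [ge_iff_le]
  calc δ * u x ^ 2 = (δ/2) * u x ^ 2 + (δ/2) * u x ^ 2 := by ring
    _ ≤ _ := by rw [← hsplit]; exact add_le_add hIA hIB
end

section
/- Let 0 < γ ≤ 4, 0 ≤ β ≤ 1, δ = (√γ/4)(√(12-3γ) - √γ), and p(x) = (1/2)e^{-|x|}. Then for every u ∈ H¹(ℝ) and every x ∈ ℝ: ((p + β p') * ((3-γ)/2 · u² + (γ/2) u'²))(x) ≥ δ u(x)², where p'(x) = -(sign x)(1/2)e^{-|x|} (defined for x ≠ 0). -/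
open MeasureTheory Real

noncomputable def p' (x : ℝ) : ℝ := -(Real.sign x) * (1/2) * Real.exp (-|x|)

set_option maxHeartbeats 2000000

theorem kernel_plus_inequality
    (γ β : ℝ) (hγ0 : 0 < γ) (hγ4 : γ ≤ 4) (hβ0 : 0 ≤ β) (hβ1 : β ≤ 1)
    (δ : ℝ) (hδ : δ = (Real.sqrt γ / 4) * (Real.sqrt (12 - 3*γ) - Real.sqrt γ))
    (u : ℝ → ℝ) (hu : Differentiable ℝ u)
    (hu2 : MemLp u 2 volume) (hu'2 : MemLp (deriv u) 2 volume) :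
    ∀ x : ℝ,
      (∫ y, (p (x - y) + β * p' (x - y)) * ((3 - γ)/2 * u y^2 + (γ/2) * deriv u y^2))
        ≥ δ * u x^2 := by
  -- key algebraic identity for δ
  have h12 : (0:ℝ) ≤ 12 - 3*γ := by linarith
  have hq : (Real.sqrt γ * Real.sqrt (12-3*γ))^2 = γ*(12-3*γ) := by
    rw [mul_pow, Real.sq_sqrt hγ0.le, Real.sq_sqrt h12]
  have hss : Real.sqrt γ * Real.sqrt γ = γ := Real.mul_self_sqrt hγ0.le
  have hδq : δ = (Real.sqrt γ * Real.sqrt (12-3*γ) - γ)/4 := by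
    rw [hδ]; linear_combination (-(1:ℝ)/4) * hss
  have hkey : δ^2 + (γ/2)*δ - ((3-γ)/2)*(γ/2) = 0 := by
    rw [hδq]; linear_combination (1/16 : ℝ) * hq
  -- pointwise quadratic-form inequalities
  have keyP : ∀ a b : ℝ, δ * (a^2 + 2*(a*b)) ≤ (3-γ)/2*a^2 + γ/2*b^2 := by
    intro a b
    have hmul : (γ/2) * ((3-γ)/2*a^2 + γ/2*b^2 - δ*(a^2 + 2*(a*b)))
        = (γ/2*b - δ*a)^2 := by linear_combination (-a^2) * hkey
    nlinarith [hmul, sq_nonneg (γ/2*b - δ*a), hγ0]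
  have keyM : ∀ a b : ℝ, δ * (a^2 - 2*(a*b)) ≤ (3-γ)/2*a^2 + γ/2*b^2 := by
    intro a b
    have := keyP a (-b)
    have h2 : δ * (a^2 + 2*(a*(-b))) = δ * (a^2 - 2*(a*b)) := by ring
    rw [h2] at this
    nlinarith [this]
  -- integrability of the basic pieces
  have hI2 : Integrable (fun y => u y ^ 2) := hu2.integrable_sq
  have hI2' : Integrable (fun y => deriv u y ^ 2) := hu'2.integrable_sq
  have hmes_u : AEStronglyMeasurable u volume := hu.continuous.aestronglyMeasurable
  have hIuv : Integrable (fun y => u y * deriv u y) := by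
    have hg : Integrable (fun y => (1/2) * (u y ^ 2 + deriv u y ^ 2)) :=
      (hI2.add hI2').const_mul (1/2)
    refine Integrable.mono' hg (hmes_u.mul hu'2.1) ?_
    refine ae_of_all _ (fun y => ?_)
    have h1 : ‖u y * deriv u y‖ = |u y| * |deriv u y| := by
      rw [norm_mul]; rfl
    rw [h1]
    nlinarith [sq_nonneg (|u y| - |deriv u y|), sq_abs (u y), sq_abs (deriv u y)]
  set F : ℝ → ℝ := fun y => (3 - γ)/2 * u y^2 + γ/2 * deriv u y^2 with hFdef
  have hF : Integrable F := (hI2.const_mul _).add (hI2'.const_mul _)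
  -- derivative facts
  have hu2d : ∀ y : ℝ, HasDerivAt (fun t => u t ^ 2) (2 * (u y * deriv u y)) y := by
    intro y
    have := ((hu y).hasDerivAt).fun_pow 2
    simpa [mul_comm, mul_assoc, mul_left_comm] using this
  have hIuv2 : Integrable (fun y => 2 * (u y * deriv u y)) := hIuv.const_mul 2
  -- u^2 tends to 0 at ±∞
  have husqB : Filter.Tendsto (fun y => u y ^ 2) Filter.atBot (nhds 0) :=
    tendsto_zero_of_hasDerivAt_of_integrableOn_Iic (a := 0)
      (fun y _ => hu2d y) hIuv2.integrableOn hI2.integrableOn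
  have husqT : Filter.Tendsto (fun y => u y ^ 2) Filter.atTop (nhds 0) :=
    tendsto_zero_of_hasDerivAt_of_integrableOn_Ioi (a := 0)
      (fun y _ => hu2d y) hIuv2.integrableOn hI2.integrableOn
  intro x
  -- half-line weighted integrability
  have hexp_mes : ∀ c : ℝ, AEStronglyMeasurable (fun y => Real.exp (c * y - c * x)) volume :=
    fun c => (Real.continuous_exp.comp (by continuity)).aestronglyMeasurable
  have hbddL : ∀ᵐ y ∂(volume.restrict (Set.Iic x)), ‖Real.exp (1 * y - 1 * x)‖ ≤ 1 := by
    refine ae_restrict_of_forall_mem measurableSet_Iic (fun y hy => ?_)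
    rw [Real.norm_eq_abs, abs_of_pos (Real.exp_pos _)]
    refine Real.exp_le_one_iff.2 ?_
    have : y ≤ x := hy
    linarith
  have hbddR : ∀ᵐ y ∂(volume.restrict (Set.Ioi x)), ‖Real.exp ((-1) * y - (-1) * x)‖ ≤ 1 := by
    refine ae_restrict_of_forall_mem measurableSet_Ioi (fun y hy => ?_)
    rw [Real.norm_eq_abs, abs_of_pos (Real.exp_pos _)]
    refine Real.exp_le_one_iff.2 ?_
    have : x < y := hy
    nlinarith
  have hwL : ∀ (w : ℝ → ℝ), Integrable w →
      IntegrableOn (fun y => Real.exp (y - x) * w y) (Set.Iic x) := by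
    intro w hw
    have := Integrable.bdd_mul (c := 1) hw.integrableOn (hexp_mes 1).restrict hbddL
    refine this.congr (ae_of_all _ (fun y => by beta_reduce; rw [show (1:ℝ)*y - 1*x = y - x by ring]))
  have hwR : ∀ (w : ℝ → ℝ), Integrable w →
      IntegrableOn (fun y => Real.exp (x - y) * w y) (Set.Ioi x) := by
    intro w hw
    have := Integrable.bdd_mul (c := 1) hw.integrableOn (hexp_mes (-1)).restrict hbddR
    refine this.congr (ae_of_all _ (fun y => by beta_reduce; rw [show (-1:ℝ)*y - (-1)*x = x - y by ring]))
  -- Left half-line: FTC and comparison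
  have hGderiv : ∀ y : ℝ, HasDerivAt (fun t => δ * (Real.exp (t - x) * u t ^ 2))
      (δ * (Real.exp (y - x) * (u y ^ 2 + 2 * (u y * deriv u y)))) y := by
    intro y
    have he : HasDerivAt (fun t => Real.exp (t - x)) (Real.exp (y - x)) y := by
      simpa [Function.comp_def] using (Real.hasDerivAt_exp (y - x)).comp y ((hasDerivAt_id y).sub_const x)
    have h := HasDerivAt.const_mul δ (he.fun_mul (hu2d y))
    refine h.congr_deriv ?_
    ring
  have hGint : IntegrableOn
      (fun y => δ * (Real.exp (y - x) * (u y ^ 2 + 2 * (u y * deriv u y)))) (Set.Iic x) := by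
    have hw : Integrable (fun y => δ * (u y ^ 2 + 2 * (u y * deriv u y))) :=
      (hI2.add hIuv2).const_mul δ
    refine (hwL _ hw).congr (ae_of_all _ (fun y => by beta_reduce; ring))
  have hGtend : Filter.Tendsto (fun y => δ * (Real.exp (y - x) * u y ^ 2))
      Filter.atBot (nhds 0) := by
    have h0 : Filter.Tendsto (fun y => Real.exp (y - x) * u y ^ 2) Filter.atBot (nhds 0) := by
      refine squeeze_zero' (Filter.Eventually.of_forall (fun y => by positivity)) ?_ husqB
      filter_upwards [Filter.eventually_le_atBot x] with y hy
      have h1 : Real.exp (y - x) ≤ 1 := Real.exp_le_one_iff.2 (by linarith)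
      nlinarith [sq_nonneg (u y)]
    simpa using h0.const_mul δ
  have hLFTC : ∫ y in Set.Iic x, δ * (Real.exp (y - x) * (u y ^ 2 + 2 * (u y * deriv u y)))
      = δ * u x ^ 2 := by
    have h := integral_Iic_of_hasDerivAt_of_tendsto (a := x)
      (f := fun t => δ * (Real.exp (t - x) * u t ^ 2))
      (f' := fun y => δ * (Real.exp (y - x) * (u y ^ 2 + 2 * (u y * deriv u y))))
      ((hGderiv x).continuousAt.continuousWithinAt) (fun y _ => hGderiv y) hGint hGtend
    simpa using h
  have hLmono : δ * u x ^ 2 ≤ ∫ y in Set.Iic x, Real.exp (y - x) * F y := by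
    rw [← hLFTC]
    refine setIntegral_mono_on hGint (hwL F hF) measurableSet_Iic (fun y _ => ?_)
    have hkp := keyP (u y) (deriv u y)
    calc δ * (Real.exp (y - x) * (u y ^ 2 + 2 * (u y * deriv u y)))
        = Real.exp (y - x) * (δ * (u y ^ 2 + 2 * (u y * deriv u y))) := by ring
      _ ≤ Real.exp (y - x) * F y :=
          mul_le_mul_of_nonneg_left hkp (Real.exp_nonneg _)
  -- Right half-line: FTC and comparison
  have hHderiv : ∀ y : ℝ, HasDerivAt (fun t => δ * (Real.exp (x - t) * u t ^ 2))
      (δ * (Real.exp (x - y) * (2 * (u y * deriv u y) - u y ^ 2))) y := by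
    intro y
    have he : HasDerivAt (fun t => Real.exp (x - t)) (-Real.exp (x - y)) y := by
      simpa [Function.comp_def] using (Real.hasDerivAt_exp (x - y)).comp y ((hasDerivAt_id y).const_sub x)
    have h := HasDerivAt.const_mul δ (he.fun_mul (hu2d y))
    refine h.congr_deriv ?_
    ring
  have hHint : IntegrableOn
      (fun y => δ * (Real.exp (x - y) * (2 * (u y * deriv u y) - u y ^ 2))) (Set.Ioi x) := by
    have hw : Integrable (fun y => δ * (2 * (u y * deriv u y) - u y ^ 2)) :=
      (hIuv2.sub hI2).const_mul δ
    refine (hwR _ hw).congr (ae_of_all _ (fun y => by beta_reduce; ring))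
  have hHtend : Filter.Tendsto (fun y => δ * (Real.exp (x - y) * u y ^ 2))
      Filter.atTop (nhds 0) := by
    have h0 : Filter.Tendsto (fun y => Real.exp (x - y) * u y ^ 2) Filter.atTop (nhds 0) := by
      refine squeeze_zero' (Filter.Eventually.of_forall (fun y => by positivity)) ?_ husqT
      filter_upwards [Filter.eventually_ge_atTop x] with y hy
      have h1 : Real.exp (x - y) ≤ 1 := Real.exp_le_one_iff.2 (by linarith)
      nlinarith [sq_nonneg (u y)]
    simpa using h0.const_mul δ
  have hRFTC : ∫ y in Set.Ioi x, δ * (Real.exp (x - y) * (2 * (u y * deriv u y) - u y ^ 2))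
      = -(δ * u x ^ 2) := by
    have h := integral_Ioi_of_hasDerivAt_of_tendsto (a := x)
      (f := fun t => δ * (Real.exp (x - t) * u t ^ 2))
      (f' := fun y => δ * (Real.exp (x - y) * (2 * (u y * deriv u y) - u y ^ 2)))
      ((hHderiv x).continuousAt.continuousWithinAt) (fun y _ => hHderiv y) hHint hHtend
    simpa using h
  have hRmono : δ * u x ^ 2 ≤ ∫ y in Set.Ioi x, Real.exp (x - y) * F y := by
    have hneg : ∫ y in Set.Ioi x,
        -(δ * (Real.exp (x - y) * (2 * (u y * deriv u y) - u y ^ 2))) = δ * u x ^ 2 := by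
      rw [integral_neg, hRFTC, neg_neg]
    rw [← hneg]
    refine setIntegral_mono_on hHint.neg (hwR F hF) measurableSet_Ioi (fun y _ => ?_)
    have hkm := keyM (u y) (deriv u y)
    calc -(δ * (Real.exp (x - y) * (2 * (u y * deriv u y) - u y ^ 2)))
        = Real.exp (x - y) * (δ * (u y ^ 2 - 2 * (u y * deriv u y))) := by ring
      _ ≤ Real.exp (x - y) * F y :=
          mul_le_mul_of_nonneg_left hkm (Real.exp_nonneg _)
  -- kernel identification
  set M : ℝ → ℝ := fun y =>
    (if y < x then (1-β)/2 * Real.exp (y - x) else (1+β)/2 * Real.exp (x - y)) * F y with hMdef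
  have hmes : Measurable (fun y : ℝ =>
      if y < x then (1-β)/2 * Real.exp (y - x) else (1+β)/2 * Real.exp (x - y)) := by
    refine Measurable.ite measurableSet_Iio ?_ ?_
    · exact (Real.continuous_exp.comp (by continuity)).measurable.const_mul _
    · exact (Real.continuous_exp.comp (by continuity)).measurable.const_mul _
  have hbnd : ∀ y : ℝ,
      ‖if y < x then (1-β)/2 * Real.exp (y - x) else (1+β)/2 * Real.exp (x - y)‖ ≤ 1 := by
    intro y
    rw [Real.norm_eq_abs]
    by_cases h : y < x
    · rw [if_pos h, abs_of_nonneg (mul_nonneg (by linarith) (Real.exp_nonneg _))]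
      have h1 : Real.exp (y - x) ≤ 1 := Real.exp_le_one_iff.2 (by linarith)
      nlinarith [Real.exp_pos (y - x)]
    · rw [if_neg h, abs_of_nonneg (mul_nonneg (by linarith) (Real.exp_nonneg _))]
      push_neg at h
      have h1 : Real.exp (x - y) ≤ 1 := Real.exp_le_one_iff.2 (by linarith)
      nlinarith [Real.exp_pos (x - y)]
  have hM : Integrable M :=
    Integrable.bdd_mul (c := 1) hF hmes.aestronglyMeasurable (ae_of_all _ hbnd)
  have hne : ∀ᵐ (y : ℝ), y ≠ x := by
    rw [MeasureTheory.ae_iff]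
    simp only [ne_eq, not_not, Set.setOf_eq_eq_singleton]; exact measure_singleton x
  have hKeq : ∀ y : ℝ, y ≠ x → (p (x - y) + β * p' (x - y)) * F y = M y := by
    intro y hy
    rcases lt_or_gt_of_ne hy with h | h
    · have hpos : 0 < x - y := by linarith
      simp only [hMdef, p, p', if_pos h, Real.sign_of_pos hpos, abs_of_pos hpos, neg_sub]
      ring
    · have hneg : x - y < 0 := by linarith
      simp only [hMdef, p, p', if_neg (not_lt.2 h.le), Real.sign_of_neg hneg,
        abs_of_neg hneg, neg_neg]
      ring
  have hK : Integrable (fun y => (p (x - y) + β * p' (x - y)) * F y) := by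
    refine hM.congr ?_
    filter_upwards [hne] with y hy
    exact (hKeq y hy).symm
  have hsplit := intervalIntegral.integral_Iic_add_Ioi (b := x) hK.integrableOn hK.integrableOn
  have hL : ∫ y in Set.Iic x, (p (x - y) + β * p' (x - y)) * F y
      = (1-β)/2 * ∫ y in Set.Iic x, Real.exp (y - x) * F y := by
    rw [← MeasureTheory.integral_const_mul]
    refine setIntegral_congr_ae measurableSet_Iic ?_
    filter_upwards [hne] with y hy hyx
    have h : y < x := lt_of_le_of_ne hyx hy
    rw [hKeq y hy]
    simp only [hMdef, if_pos h]
    ring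
  have hR : ∫ y in Set.Ioi x, (p (x - y) + β * p' (x - y)) * F y
      = (1+β)/2 * ∫ y in Set.Ioi x, Real.exp (x - y) * F y := by
    rw [← MeasureTheory.integral_const_mul]
    refine setIntegral_congr_ae measurableSet_Ioi ?_
    filter_upwards [hne] with y hy hyx
    have h : ¬ y < x := not_lt.2 (le_of_lt hyx)
    rw [hKeq y hy]
    simp only [hMdef, if_neg h]
    ring
  have hLb : (1-β)/2 * (δ * u x ^ 2) ≤ (1-β)/2 * ∫ y in Set.Iic x, Real.exp (y - x) * F y :=
    mul_le_mul_of_nonneg_left hLmono (by linarith)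
  have hRb : (1+β)/2 * (δ * u x ^ 2) ≤ (1+β)/2 * ∫ y in Set.Ioi x, Real.exp (x - y) * F y :=
    mul_le_mul_of_nonneg_left hRmono (by linarith)
  rw [ge_iff_le, ← hsplit, hL, hR]
  have hsum : (1-β)/2 * (δ * u x ^ 2) + (1+β)/2 * (δ * u x ^ 2) = δ * u x ^ 2 := by ring
  linarith
end

section
/- Let 0 < γ ≤ 4, 0 ≤ β ≤ 1, δ = (√γ/4)(√(12-3γ) - √γ). Then for every u ∈ H¹(ℝ) and every x ∈ ℝ: ((p - β p') * ((3-γ)/2 · u² + (γ/2) u'²))(x) ≥ δ u(x)², where p(x) = (1/2)e^{-|x|}. -/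
open MeasureTheory Real Set Filter

lemma measurable_realSign : Measurable Real.sign := by
  have h : Real.sign = fun r : ℝ => if r < 0 then (-1:ℝ) else if 0 < r then 1 else 0 := by
    funext r; rfl
  rw [h]
  exact Measurable.ite (measurableSet_lt measurable_id measurable_const) measurable_const
    (Measurable.ite (measurableSet_lt measurable_const measurable_id) measurable_const
      measurable_const)

lemma abs_realSign (r : ℝ) : |Real.sign r| ≤ 1 := by
  rcases Real.sign_apply_eq r with h | h | h <;> rw [h] <;> norm_num

lemma kernel_pos_val {β z : ℝ} (hz : 0 < z) :
    p z - β * p' z = (1 + β) * ((1/2) * Real.exp (-z)) := by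
  simp only [p, p', Real.sign_of_pos hz, abs_of_pos hz]; ring

lemma kernel_neg_val {β z : ℝ} (hz : z < 0) :
    p z - β * p' z = (1 - β) * ((1/2) * Real.exp z) := by
  simp only [p, p', Real.sign_of_neg hz, abs_of_neg hz, neg_neg]; ring

lemma kernel_nonneg {β : ℝ} (hβ0 : 0 ≤ β) (hβ1 : β ≤ 1) (z : ℝ) :
    0 ≤ p z - β * p' z := by
  rcases lt_trichotomy z 0 with h | h | h
  · rw [kernel_neg_val h]
    exact mul_nonneg (by linarith) (by positivity)
  · subst h
    have h0 : p 0 - β * p' 0 = 1/2 := by simp [p, p', Real.sign_zero]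
    rw [h0]; norm_num
  · rw [kernel_pos_val h]
    exact mul_nonneg (by linarith) (by positivity)

lemma kernel_le_one {β : ℝ} (hβ0 : 0 ≤ β) (hβ1 : β ≤ 1) (z : ℝ) :
    ‖p z - β * p' z‖ ≤ 1 := by
  rw [Real.norm_eq_abs, abs_of_nonneg (kernel_nonneg hβ0 hβ1 z)]
  rcases lt_trichotomy z 0 with h | h | h
  · rw [kernel_neg_val h]
    have h1 := Real.exp_le_one_iff.2 h.le
    nlinarith [Real.exp_pos z]
  · subst h
    have h0 : p 0 - β * p' 0 = 1/2 := by simp [p, p', Real.sign_zero]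
    rw [h0]; norm_num
  · rw [kernel_pos_val h]
    have h1 := Real.exp_le_one_iff.2 (show -z ≤ 0 by linarith)
    nlinarith [Real.exp_pos (-z)]

lemma kernel_measurable (x β : ℝ) :
    Measurable (fun y : ℝ => p (x - y) - β * p' (x - y)) := by
  have hm : Measurable fun y : ℝ => x - y := measurable_const.sub measurable_id
  apply Measurable.sub
  · exact measurable_const.mul (hm.abs.neg.exp)
  · exact measurable_const.mul
      ((((measurable_realSign.comp hm).neg.mul measurable_const).mul hm.abs.neg.exp))

set_option maxHeartbeats 2000000 in
theorem kernel_minus_inequality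
    (γ β : ℝ) (hγ0 : 0 < γ) (hγ4 : γ ≤ 4) (hβ0 : 0 ≤ β) (hβ1 : β ≤ 1)
    (δ : ℝ) (hδ : δ = (Real.sqrt γ / 4) * (Real.sqrt (12 - 3*γ) - Real.sqrt γ))
    (u : ℝ → ℝ) (hu : Differentiable ℝ u)
    (hu2 : MemLp u 2 volume) (hu'2 : MemLp (deriv u) 2 volume) :
    ∀ x : ℝ,
      (∫ y, (p (x - y) - β * p' (x - y)) * ((3 - γ)/2 * u y^2 + (γ/2) * deriv u y^2))
        ≥ δ * u x^2 := by
  intro x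
  set v : ℝ → ℝ := deriv u with hv
  have huC : Continuous u := hu.continuous
  have hvM : AEStronglyMeasurable v volume := hu'2.aestronglyMeasurable
  -- basic integrability
  have hu2i : Integrable (fun y => u y ^ 2) := hu2.integrable_sq
  have hv2i : Integrable (fun y => v y ^ 2) := hu'2.integrable_sq
  have huvM : AEStronglyMeasurable (fun y => u y * v y) volume :=
    huC.aestronglyMeasurable.mul hvM
  have huvi : Integrable (fun y => u y * v y) := by
    refine ((hu2i.add hv2i).div_const 2).mono' huvM ?_
    filter_upwards with y
    rw [Real.norm_eq_abs, abs_mul]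
    simp only [Pi.add_apply]
    nlinarith [sq_nonneg (|u y| - |v y|), sq_abs (u y), sq_abs (v y),
      abs_nonneg (u y), abs_nonneg (v y)]
  -- the quadratic-form constants
  have hbpos : (0:ℝ) < γ/2 := by linarith
  have hδsq : δ^2 = ((3-γ)/2 - δ) * (γ/2) := by
    have h1 : Real.sqrt γ * Real.sqrt γ = γ := Real.mul_self_sqrt hγ0.le
    have h2 : Real.sqrt (12-3*γ) * Real.sqrt (12-3*γ) = 12 - 3*γ :=
      Real.mul_self_sqrt (by linarith)
    rw [hδ]
    linear_combination (Real.sqrt (12-3*γ)*Real.sqrt (12-3*γ)/16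
        + (Real.sqrt γ*Real.sqrt γ + γ)/16 - Real.sqrt γ*Real.sqrt (12-3*γ)/8 - γ/8) * h1
      + (γ/16) * h2
  have quad : ∀ U V ε : ℝ, |ε| ≤ 1 →
      δ * (U^2 + 2*ε*(U*V)) ≤ (3-γ)/2*U^2 + (γ/2)*V^2 := by
    intro U V ε hε
    have hε' := abs_le.mp hε
    have e1 : 0 ≤ (1+ε) * (δ*U - (γ/2)*V)^2 := mul_nonneg (by linarith) (sq_nonneg _)
    have e2 : 0 ≤ (1-ε) * (δ*U + (γ/2)*V)^2 := mul_nonneg (by linarith) (sq_nonneg _)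
    have h2 : (γ/2) * (δ * (U^2 + 2*ε*(U*V))) ≤ (γ/2) * ((3-γ)/2*U^2 + (γ/2)*V^2) := by
      nlinarith [e1, e2, hδsq, sq_nonneg U]
    exact le_of_mul_le_mul_left h2 hbpos
  -- abbreviations (not `set`, to keep goal syntactic)
  have hkM : AEStronglyMeasurable (fun y : ℝ => p (x - y) - β * p' (x - y)) volume :=
    (kernel_measurable x β).aestronglyMeasurable
  have hsM : AEStronglyMeasurable (fun y : ℝ => 2 * Real.sign (x - y)) volume :=
    (measurable_const.mul
      (measurable_realSign.comp (measurable_const.sub measurable_id))).aestronglyMeasurable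
  -- g and its integrability
  have hgi : Integrable (fun y => u y ^ 2 + 2 * Real.sign (x - y) * (u y * v y)) := by
    refine hu2i.add (huvi.bdd_mul (c := 2) hsM (ae_of_all _ fun y => ?_))
    rw [Real.norm_eq_abs, abs_mul, abs_two]
    nlinarith [abs_realSign (x - y)]
  have hfi : Integrable (fun y => (3 - γ)/2 * u y^2 + (γ/2) * v y^2) :=
    (hu2i.const_mul _).add (hv2i.const_mul _)
  have hkfi : Integrable
      (fun y => (p (x - y) - β * p' (x - y)) * ((3 - γ)/2 * u y^2 + (γ/2) * v y^2)) :=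
    hfi.bdd_mul (c := 1) hkM (ae_of_all _ fun y => kernel_le_one hβ0 hβ1 _)
  have hkgi : Integrable
      (fun y => (p (x - y) - β * p' (x - y)) *
        (u y ^ 2 + 2 * Real.sign (x - y) * (u y * v y))) :=
    hgi.bdd_mul (c := 1) hkM (ae_of_all _ fun y => kernel_le_one hβ0 hβ1 _)
  -- FTC on the left half line
  have hd2 : ∀ y, HasDerivAt (fun y => u y ^ 2) (2 * (u y * v y)) y := by
    intro y
    have := ((hu y).hasDerivAt).fun_pow 2
    simpa [hv, mul_assoc] using this
  have hDL : ∀ y, HasDerivAt (fun y => (1+β)/2 * (Real.exp (y - x) * u y ^ 2))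
      ((1+β)/2 * (Real.exp (y - x) * (u y ^ 2 + 2*(u y * v y)))) y := by
    intro y
    have h1 : HasDerivAt (fun y : ℝ => Real.exp (y - x)) (Real.exp (y - x)) y := by
      simpa using ((hasDerivAt_id y).sub_const x).exp
    have := (h1.fun_mul (hd2 y)).const_mul ((1+β)/2)
    exact this.congr_deriv (by ring)
  have hboundL : Integrable (fun y => u y ^ 2 + 2 * |u y * v y|) :=
    hu2i.add (huvi.abs.const_mul 2)
  have hexpM : AEStronglyMeasurable (fun y : ℝ => Real.exp (y - x)) volume :=
    (Real.continuous_exp.comp (continuous_id.sub continuous_const)).aestronglyMeasurable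
  have hFLint : IntegrableOn (fun y => (1+β)/2 * (Real.exp (y - x) * u y ^ 2)) (Iic x) := by
    refine (hu2i.integrableOn).mono'
      ((aestronglyMeasurable_const.mul (hexpM.mul (huC.aestronglyMeasurable.pow 2))).restrict) ?_
    rw [ae_restrict_iff' measurableSet_Iic]
    filter_upwards with y hy
    have he1 : Real.exp (y - x) ≤ 1 := Real.exp_le_one_iff.2 (by simpa using hy.out)
    have he0 := Real.exp_pos (y - x)
    have h3 : (1+β)/2 * Real.exp (y - x) ≤ 1 := by
      nlinarith [mul_nonneg (show (0:ℝ) ≤ (1+β)/2 by linarith)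
        (show (0:ℝ) ≤ 1 - Real.exp (y - x) by linarith)]
    rw [Real.norm_eq_abs, abs_mul, abs_mul, abs_of_nonneg (sq_nonneg (u y)),
      abs_of_pos he0, abs_of_nonneg (by linarith : (0:ℝ) ≤ (1+β)/2)]
    nlinarith [mul_le_mul_of_nonneg_right h3 (sq_nonneg (u y))]
  have hFLint' : IntegrableOn
      (fun y => (1+β)/2 * (Real.exp (y - x) * (u y ^ 2 + 2*(u y * v y)))) (Iic x) := by
    refine (hboundL.integrableOn).mono'
      ((aestronglyMeasurable_const.mul (hexpM.mul
        ((huC.aestronglyMeasurable.pow 2).add (huvM.const_mul 2)))).restrict) ?_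
    rw [ae_restrict_iff' measurableSet_Iic]
    filter_upwards with y hy
    have he1 : Real.exp (y - x) ≤ 1 := Real.exp_le_one_iff.2 (by simpa using hy.out)
    have he0 := Real.exp_pos (y - x)
    have t1 : |u y^2 + 2*(u y * v y)| ≤ u y^2 + 2*|u y * v y| := by
      calc |u y^2 + 2*(u y*v y)| ≤ |u y^2| + |2*(u y * v y)| := abs_add_le _ _
      _ = u y^2 + 2*|u y * v y| := by rw [abs_of_nonneg (sq_nonneg _), abs_mul, abs_two]
    have h3 : (1+β)/2 * Real.exp (y - x) ≤ 1 := by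
      nlinarith [mul_nonneg (show (0:ℝ) ≤ (1+β)/2 by linarith)
        (show (0:ℝ) ≤ 1 - Real.exp (y - x) by linarith)]
    rw [Real.norm_eq_abs, abs_mul, abs_mul, abs_of_pos he0,
      abs_of_nonneg (by linarith : (0:ℝ) ≤ (1+β)/2)]
    nlinarith [mul_le_mul_of_nonneg_right h3 (abs_nonneg (u y^2 + 2*(u y * v y))), t1,
      mul_nonneg (show (0:ℝ) ≤ (1+β)/2 * Real.exp (y-x) by positivity)
        (abs_nonneg (u y^2 + 2*(u y * v y)))]
  have htendL : Tendsto (fun y => (1+β)/2 * (Real.exp (y - x) * u y ^ 2)) atBot (nhds 0) :=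
    tendsto_zero_of_hasDerivAt_of_integrableOn_Iic (a := x)
      (fun y _ => hDL y) hFLint' hFLint
  have hIL : ∫ y in Iic x, (1+β)/2 * (Real.exp (y - x) * (u y ^ 2 + 2*(u y * v y)))
      = (1+β)/2 * u x ^ 2 := by
    rw [integral_Iic_of_hasDerivAt_of_tendsto' (fun y _ => hDL y) hFLint' htendL]
    simp
  -- FTC on the right half line
  have hDR : ∀ y, HasDerivAt (fun y => -((1-β)/2) * (Real.exp (x - y) * u y ^ 2))
      ((1-β)/2 * (Real.exp (x - y) * (u y ^ 2 - 2*(u y * v y)))) y := by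
    intro y
    have h1 : HasDerivAt (fun y : ℝ => Real.exp (x - y)) (-Real.exp (x - y)) y := by
      have := (((hasDerivAt_id y).const_sub x)).exp
      simpa using this
    have := (h1.fun_mul (hd2 y)).const_mul (-((1-β)/2))
    exact this.congr_deriv (by ring)
  have hexpM' : AEStronglyMeasurable (fun y : ℝ => Real.exp (x - y)) volume :=
    (Real.continuous_exp.comp (continuous_const.sub continuous_id)).aestronglyMeasurable
  have hFRint : IntegrableOn (fun y => -((1-β)/2) * (Real.exp (x - y) * u y ^ 2)) (Ioi x) := by
    refine (hu2i.integrableOn).mono'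
      ((aestronglyMeasurable_const.mul (hexpM'.mul (huC.aestronglyMeasurable.pow 2))).restrict) ?_
    rw [ae_restrict_iff' measurableSet_Ioi]
    filter_upwards with y hy
    have he1 : Real.exp (x - y) ≤ 1 := Real.exp_le_one_iff.2 (by simp at hy; linarith)
    have he0 := Real.exp_pos (x - y)
    have h3 : (1-β)/2 * Real.exp (x - y) ≤ 1 := by
      nlinarith [mul_nonneg (show (0:ℝ) ≤ (1-β)/2 by linarith)
        (show (0:ℝ) ≤ 1 - Real.exp (x - y) by linarith)]
    rw [Real.norm_eq_abs, abs_mul, abs_mul, abs_of_nonneg (sq_nonneg (u y)),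
      abs_of_pos he0, abs_neg, abs_of_nonneg (by linarith : (0:ℝ) ≤ (1-β)/2)]
    nlinarith [mul_le_mul_of_nonneg_right h3 (sq_nonneg (u y))]
  have hFRint' : IntegrableOn
      (fun y => (1-β)/2 * (Real.exp (x - y) * (u y ^ 2 - 2*(u y * v y)))) (Ioi x) := by
    refine (hboundL.integrableOn).mono'
      ((aestronglyMeasurable_const.mul (hexpM'.mul
        ((huC.aestronglyMeasurable.pow 2).sub (huvM.const_mul 2)))).restrict) ?_
    rw [ae_restrict_iff' measurableSet_Ioi]
    filter_upwards with y hy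
    have he1 : Real.exp (x - y) ≤ 1 := Real.exp_le_one_iff.2 (by simp at hy; linarith)
    have he0 := Real.exp_pos (x - y)
    have t1 : |u y^2 - 2*(u y * v y)| ≤ u y^2 + 2*|u y * v y| := by
      calc |u y^2 - 2*(u y*v y)| ≤ |u y^2| + |2*(u y * v y)| := abs_sub _ _
      _ = u y^2 + 2*|u y * v y| := by rw [abs_of_nonneg (sq_nonneg _), abs_mul, abs_two]
    have h3 : (1-β)/2 * Real.exp (x - y) ≤ 1 := by
      nlinarith [mul_nonneg (show (0:ℝ) ≤ (1-β)/2 by linarith)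
        (show (0:ℝ) ≤ 1 - Real.exp (x - y) by linarith)]
    rw [Real.norm_eq_abs, abs_mul, abs_mul, abs_of_pos he0,
      abs_of_nonneg (by linarith : (0:ℝ) ≤ (1-β)/2)]
    nlinarith [mul_le_mul_of_nonneg_right h3 (abs_nonneg (u y^2 - 2*(u y * v y))), t1,
      mul_nonneg (mul_nonneg (show (0:ℝ) ≤ (1-β)/2 by linarith) (Real.exp_pos (x-y)).le)
        (abs_nonneg (u y^2 - 2*(u y * v y)))]
  have htendR : Tendsto (fun y => -((1-β)/2) * (Real.exp (x - y) * u y ^ 2)) atTop (nhds 0) :=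
    tendsto_zero_of_hasDerivAt_of_integrableOn_Ioi (a := x)
      (fun y _ => hDR y) hFRint' hFRint
  have hIR : ∫ y in Ioi x, (1-β)/2 * (Real.exp (x - y) * (u y ^ 2 - 2*(u y * v y)))
      = (1-β)/2 * u x ^ 2 := by
    rw [integral_Ioi_of_hasDerivAt_of_tendsto' (fun y _ => hDR y) hFRint' htendR]
    norm_num
  -- a.e. identification of the kernel integrand with the FTC integrands
  have hne : ∀ᵐ y : ℝ, y ≠ x := by
    filter_upwards [compl_mem_ae_iff.mpr (measure_singleton x)] with y hy
    simpa using hy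
  have hcongrL : ∫ y in Iic x,
      (p (x - y) - β * p' (x - y)) * (u y ^ 2 + 2 * Real.sign (x - y) * (u y * v y))
      = ∫ y in Iic x, (1+β)/2 * (Real.exp (y - x) * (u y ^ 2 + 2*(u y * v y))) := by
    refine setIntegral_congr_ae measurableSet_Iic ?_
    filter_upwards [hne] with y hy hyx
    have hlt : 0 < x - y := by
      rcases lt_or_eq_of_le hyx.out with h | h
      · linarith
      · exact absurd h hy
    rw [kernel_pos_val hlt, Real.sign_of_pos hlt]
    have : Real.exp (-(x - y)) = Real.exp (y - x) := by rw [neg_sub]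
    rw [this]; ring
  have hcongrR : ∫ y in Ioi x,
      (p (x - y) - β * p' (x - y)) * (u y ^ 2 + 2 * Real.sign (x - y) * (u y * v y))
      = ∫ y in Ioi x, (1-β)/2 * (Real.exp (x - y) * (u y ^ 2 - 2*(u y * v y))) := by
    refine setIntegral_congr_ae measurableSet_Ioi ?_
    filter_upwards with y hy
    have hlt : x - y < 0 := by simp at hy; linarith
    rw [kernel_neg_val hlt, Real.sign_of_neg hlt]
    ring
  -- total integral of kernel against g
  have hgeq : ∫ y, (p (x - y) - β * p' (x - y)) *
      (u y ^ 2 + 2 * Real.sign (x - y) * (u y * v y)) = u x ^ 2 := by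
    rw [← intervalIntegral.integral_Iic_add_Ioi hkgi.integrableOn hkgi.integrableOn, hcongrL, hcongrR,
      hIL, hIR]
    ring
  -- pointwise comparison
  have hpt : ∀ y, δ * ((p (x - y) - β * p' (x - y)) *
      (u y ^ 2 + 2 * Real.sign (x - y) * (u y * v y)))
      ≤ (p (x - y) - β * p' (x - y)) * ((3 - γ)/2 * u y^2 + (γ/2) * v y^2) := by
    intro y
    have hkn := kernel_nonneg hβ0 hβ1 (x - y)
    have hq := quad (u y) (v y) (Real.sign (x - y)) (abs_realSign _)
    calc δ * ((p (x - y) - β * p' (x - y)) *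
          (u y ^ 2 + 2 * Real.sign (x - y) * (u y * v y)))
        = (p (x - y) - β * p' (x - y)) *
          (δ * (u y ^ 2 + 2 * Real.sign (x - y) * (u y * v y))) := by ring
      _ ≤ (p (x - y) - β * p' (x - y)) * ((3 - γ)/2 * u y^2 + (γ/2) * v y^2) := by
          exact mul_le_mul_of_nonneg_left hq hkn
  -- conclude
  have hmono : ∫ y, δ * ((p (x - y) - β * p' (x - y)) *
      (u y ^ 2 + 2 * Real.sign (x - y) * (u y * v y)))
      ≤ ∫ y, (p (x - y) - β * p' (x - y)) * ((3 - γ)/2 * u y^2 + (γ/2) * v y^2) :=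
    integral_mono (hkgi.const_mul δ) hkfi hpt
  rw [integral_const_mul, hgeq] at hmono
  exact hmono
end

section
/- Let γ ∈ (0,3) and a > 0 be the positive root of a² + a = (3-γ)/γ. Define u(x) = e^{-a|x|}. Then equality holds at x = 0 in the inequality (p * ((3-γ)/2 · u² + (γ/2)(u')²))(0) = δ u(0)², where δ = (√γ/4)(√(12-3γ) - √γ) and p(x) = (1/2)e^{-|x|}. -/
open MeasureTheory Real

lemma integral_exp_neg_mul_abs {b : ℝ} (hb : 0 < b) :
    (∫ y : ℝ, Real.exp (-(b * |y|))) = 2 / b := by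
  rw [integral_comp_abs (f := fun x : ℝ => Real.exp (-(b * x)))]
  have h := Real.integral_rpow_mul_exp_neg_mul_Ioi (a := 1) (r := b) one_pos hb
  simp only [sub_self, Real.rpow_zero, one_mul, Real.rpow_one, Real.Gamma_one, mul_one] at h
  rw [h]
  ring

theorem optimality_delta (γ : ℝ) (hγ0 : 0 < γ) (hγ3 : γ < 3)
    (δ : ℝ) (hδ : δ = (Real.sqrt γ / 4) * (Real.sqrt (12 - 3*γ) - Real.sqrt γ))
    (a : ℝ) (ha : a = (-1 + Real.sqrt ((12 - 3*γ)/γ)) / 2)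
    (u u' : ℝ → ℝ)
    (hu : ∀ x, u x = Real.exp (-a * |x|))
    (hu' : ∀ x, u' x = -a * Real.sign x * Real.exp (-a * |x|)) :
    (∫ y, p (0 - y) * ((3 - γ)/2 * u y^2 + (γ/2) * u' y^2)) = δ * u 0^2 := by
  set s := Real.sqrt γ with hs
  set t := Real.sqrt (12 - 3*γ) with htd
  have hs0 : 0 < s := Real.sqrt_pos.mpr hγ0
  have ht0 : 0 < t := Real.sqrt_pos.mpr (by linarith)
  have hs2 : s ^ 2 = γ := Real.sq_sqrt hγ0.le
  have ht2 : t ^ 2 = 12 - 3*γ := Real.sq_sqrt (by linarith)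
  have hsqd : Real.sqrt ((12 - 3*γ)/γ) = t / s := by
    rw [Real.sqrt_div (by linarith : (0:ℝ) ≤ 12 - 3*γ) γ]
  have ha' : a = (t/s - 1) / 2 := by rw [ha, hsqd]; ring
  have hb : 1 + 2 * a = t / s := by rw [ha']; ring
  have hbpos : 0 < 1 + 2 * a := by rw [hb]; positivity
  have key : (∫ y, p (0 - y) * ((3 - γ)/2 * u y^2 + (γ/2) * u' y^2))
      = ((3 - γ) + γ * a ^ 2) / 4 * (2 / (1 + 2 * a)) := by
    have hcongr : (∫ y, p (0 - y) * ((3 - γ)/2 * u y^2 + (γ/2) * u' y^2))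
        = ∫ y, ((3 - γ) + γ * a ^ 2) / 4 * Real.exp (-((1 + 2 * a) * |y|)) := by
      apply integral_congr_ae
      have h0 : ∀ᵐ y : ℝ, y ≠ 0 := by
        have hset : {y : ℝ | ¬ y ≠ 0} = {0} := by ext y; simp
        rw [MeasureTheory.ae_iff, hset]
        exact Real.volume_singleton
      filter_upwards [h0] with y hy
      have hsign : Real.sign y ^ 2 = 1 := by
        rcases lt_or_gt_of_ne hy with h | h
        · rw [Real.sign_of_neg h]; norm_num
        · rw [Real.sign_of_pos h]; norm_num
      simp only [p, hu, hu', zero_sub, abs_neg]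
      have he : Real.exp (-((1 + 2 * a) * |y|))
          = Real.exp (-|y|) * Real.exp (-a * |y|) ^ 2 := by
        rw [pow_two, ← Real.exp_add, ← Real.exp_add]; ring_nf
      calc (1/2 : ℝ) * Real.exp (-|y|) * ((3 - γ)/2 * Real.exp (-a * |y|) ^ 2
              + γ/2 * (-a * Real.sign y * Real.exp (-a * |y|)) ^ 2)
          = ((3 - γ)/4 + γ/4 * (Real.sign y ^ 2 * a ^ 2))
            * (Real.exp (-|y|) * Real.exp (-a * |y|) ^ 2) := by ring
        _ = ((3 - γ) + γ * a ^ 2) / 4 * Real.exp (-((1 + 2 * a) * |y|)) := by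
            rw [hsign, he]; ring
    rw [hcongr, MeasureTheory.integral_const_mul, integral_exp_neg_mul_abs hbpos]
  rw [key, hu 0]
  simp only [abs_zero, mul_zero, Real.exp_zero, one_pow, mul_one]
  have ha'' : a = (t - s) / (2 * s) := by rw [ha']; field_simp
  rw [← hs2] at ht2 ⊢
  rw [hδ, hb, ha'']
  field_simp
  linear_combination (-1) * ht2
end
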